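/- Let Q_N be the N×N symmetric circulant matrix with diagonal entries J and entries −1 at positions (i, i±1 mod N) (for N ≥ 3), all other entries 0. Then det Q_N = 2 T_N(J/2) − 2, where T_N is the N-th Chebyshev polynomial of the first kind. -/

import Mathlib

/-- Chebyshev polynomials of the first kind as real functions:
`T 0 = 1`, `T 1 x = x`, `T (n+1) x = 2x * T n x - T (n-1) x`. -/
def chebT : ℕ → ℝ → ℝ
  | 0, _ => 1
  | 1, x => x
  | n + 2, x => 2 * x * chebT (n + 1) x - chebT n x

/-- The `N × N` symmetric circulant matrix with diagonal entries `J` and entries `-1`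
at cyclically adjacent positions `(i, i ± 1 mod N)`. -/
def circMat (N : ℕ) [NeZero N] (J : ℝ) : Matrix (Fin N) (Fin N) ℝ :=
  fun i j => if i = j then J else if j = i + 1 ∨ i = j + 1 then -1 else 0

open Matrix Polynomial

private def shiftMat (N : ℕ) [NeZero N] : Matrix (Fin N) (Fin N) ℂ :=
  Matrix.of fun i j => if j = i + 1 then 1 else 0

private lemma fin_last_iff (n : ℕ) (i : Fin (n+2)) :
    (i = Fin.last (n+1)) ↔ ((0 : Fin (n+2)) = i + 1) := by
  rw [Fin.ext_iff, Fin.ext_iff, Fin.val_add_one]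
  simp only [Fin.val_zero, Fin.val_last]
  split_ifs with h <;> rw [Fin.ext_iff] at h <;> simp only [Fin.val_last] at h <;> simp [h]

private lemma fin_ne_add_one {n : ℕ} (x : Fin (n+2)) : x ≠ x + 1 := by
  rw [Ne, Fin.ext_iff, Fin.val_add_one]
  split_ifs with h
  · rw [Fin.ext_iff] at h; simp only [Fin.val_last] at h; omega
  · omega

private lemma fin_ne_add_two {m : ℕ} (hm : 1 ≤ m) (i : Fin (m+2)) : i ≠ i + 1 + 1 := by
  intro hc
  by_cases h : i = Fin.last (m+1)
  · have h0 : (0 : Fin (m+2)) = i + 1 := (fin_last_iff m i).mp h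
    rw [← h0, zero_add] at hc
    rw [h, Fin.ext_iff, Fin.val_last, Fin.val_one] at hc
    omega
  · rw [Fin.ext_iff, Fin.val_add_one] at hc
    split_ifs at hc with h'
    · rw [Fin.ext_iff, Fin.val_add_one, if_neg h, Fin.val_last] at h'
      have := i.isLt
      omega
    · rw [Fin.val_add_one, if_neg h] at hc
      omega

private lemma shift_transpose_mul (m : ℕ) : (shiftMat (m+2))ᵀ * shiftMat (m+2) = 1 := by
  ext i j
  rw [Matrix.mul_apply]
  have hterm : ∀ k : Fin (m+2),
      (shiftMat (m+2))ᵀ i k * shiftMat (m+2) k j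
        = if k = i - 1 then (if i = j then (1:ℂ) else 0) else 0 := by
    intro k
    simp only [Matrix.transpose_apply, shiftMat, Matrix.of_apply]
    by_cases hk : k = i - 1
    · subst hk
      have hi : i - 1 + 1 = i := by rw [sub_add_cancel]
      rw [hi, if_pos rfl]
      by_cases hij : i = j
      · subst hij; simp
      · rw [if_neg (fun hc => hij hc.symm), if_neg hij]; simp
    · have : ¬ (i = k + 1) := by
        intro hc; exact hk (by rw [hc]; rw [add_sub_cancel_right])
      rw [if_neg this, if_neg hk]; ring
  rw [Finset.sum_congr rfl (fun k _ => hterm k), Finset.sum_ite_eq' Finset.univ (i-1)]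
  simp [Matrix.one_apply]

private lemma shift_det (m : ℕ) : (shiftMat (m+2)).det = (-1)^(m+1) := by
  have h : shiftMat (m+2) = (finRotate (m+2)).permMatrix ℂ := by
    ext i j
    simp only [shiftMat, Matrix.of_apply, Equiv.Perm.permMatrix, PEquiv.toMatrix_apply,
      Equiv.toPEquiv_apply, Option.mem_def, Option.some.injEq]
    have : finRotate (m+2) i = i + 1 := finRotate_succ_apply i
    rw [this]
    by_cases hij : j = i + 1
    · rw [if_pos hij, if_pos hij.symm]
    · rw [if_neg hij, if_neg (fun hc => hij hc.symm)]
  rw [h, Matrix.det_permutation, sign_finRotate]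
  push_cast
  ring

private lemma det_smul_one_sub_shift (n : ℕ) (c : ℂ) :
    (c • (1 : Matrix (Fin (n+2)) (Fin (n+2)) ℂ) - shiftMat (n+2)).det = c ^ (n+2) - 1 := by
  set M : Matrix (Fin (n+2)) (Fin (n+2)) ℂ := c • 1 - shiftMat (n+2) with hM
  have hMapp : ∀ i j, M i j = (if i = j then c else 0) - (if j = i + 1 then 1 else 0) := by
    intro i j
    simp [hM, shiftMat, Matrix.one_apply, Matrix.sub_apply, Matrix.smul_apply, mul_ite]
  have hminor0 : (M.submatrix (Fin.succAbove 0) Fin.succ).det = c ^ (n+1) := by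
    rw [Fin.succAbove_zero]
    have hU : (M.submatrix Fin.succ Fin.succ).BlockTriangular id := by
      intro s t hlt
      simp only [id] at hlt
      rw [Matrix.submatrix_apply, hMapp]
      have h1 : ¬ (s.succ = t.succ) := by
        rw [Fin.ext_iff]; simp only [Fin.val_succ]
        have := Fin.lt_iff_val_lt_val.mp hlt; omega
      have h2 : ¬ (t.succ = s.succ + 1) := by
        rw [Fin.ext_iff, Fin.val_add_one]
        have := Fin.lt_iff_val_lt_val.mp hlt
        split_ifs with h
        · simp only [Fin.val_succ]; omega
        · simp only [Fin.val_succ]; omega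
      rw [if_neg h1, if_neg h2]; ring
    rw [Matrix.det_of_upperTriangular hU]
    have hd : ∀ s : Fin (n+1), (M.submatrix Fin.succ Fin.succ) s s = c := by
      intro s
      rw [Matrix.submatrix_apply, hMapp, if_pos rfl, if_neg (fin_ne_add_one s.succ)]
      ring
    simp only [hd, Finset.prod_const, Finset.card_univ, Fintype.card_fin]
  have hminorl : (M.submatrix (Fin.succAbove (Fin.last (n+1))) Fin.succ).det = (-1) ^ (n+1) := by
    rw [Fin.succAbove_last]
    have hL : (M.submatrix Fin.castSucc Fin.succ).BlockTriangular OrderDual.toDual := by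
      intro s t hlt
      have hlt' : (s : ℕ) < (t : ℕ) := Fin.lt_iff_val_lt_val.mp hlt
      rw [Matrix.submatrix_apply, hMapp]
      have h1 : ¬ (s.castSucc = t.succ) := by
        rw [Fin.ext_iff]; simp only [Fin.val_succ, Fin.coe_castSucc]; omega
      have h2 : ¬ (t.succ = s.castSucc + 1) := by
        rw [Fin.ext_iff, Fin.val_add_one]
        split_ifs with h
        · simp only [Fin.val_succ]; omega
        · simp only [Fin.val_succ, Fin.coe_castSucc]; omega
      rw [if_neg h1, if_neg h2]; ring
    rw [Matrix.det_of_lowerTriangular _ hL]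
    have hd : ∀ s : Fin (n+1), (M.submatrix Fin.castSucc Fin.succ) s s = -1 := by
      intro s
      rw [Matrix.submatrix_apply, hMapp]
      have h1 : ¬ (s.castSucc = s.succ) := by
        rw [Fin.ext_iff]; simp only [Fin.val_succ, Fin.coe_castSucc]; omega
      have h2 : s.succ = s.castSucc + 1 := by
        rw [Fin.ext_iff, Fin.val_add_one]
        split_ifs with h
        · rw [Fin.ext_iff] at h; simp only [Fin.coe_castSucc, Fin.val_last] at h
          have := s.isLt; omega
        · simp only [Fin.val_succ, Fin.coe_castSucc]
      rw [if_neg h1, if_pos h2]; ring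
    simp only [hd, Finset.prod_const, Finset.card_univ, Fintype.card_fin]
  rw [Matrix.det_succ_column_zero]
  have hcol : ∀ i : Fin (n+2), M i 0 =
      (if i = 0 then c else 0) - (if i = Fin.last (n+1) then 1 else 0) := by
    intro i
    rw [hMapp]
    have h1 : ((i : Fin (n+2)) = 0) = ((0 : Fin (n+2)) = i) := by rw [eq_iff_iff]; exact eq_comm
    have h2 : (i = Fin.last (n+1)) = ((0 : Fin (n+2)) = i + 1) := by
      rw [eq_iff_iff]; exact fin_last_iff n i
    simp only [h1, h2]
  have hzero : ∀ i ∈ (Finset.univ : Finset (Fin (n+2))),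
      i ∉ ({0, Fin.last (n+1)} : Finset (Fin (n+2))) →
      (-1 : ℂ) ^ (i : ℕ) * M i 0 * (M.submatrix i.succAbove Fin.succ).det = 0 := by
    intro i _ hi
    simp only [Finset.mem_insert, Finset.mem_singleton, not_or] at hi
    rw [hcol, if_neg hi.1, if_neg hi.2]
    ring
  rw [← Finset.sum_subset (Finset.subset_univ ({0, Fin.last (n+1)} : Finset (Fin (n+2)))) hzero]
  have hne : (0 : Fin (n+2)) ≠ Fin.last (n+1) := by
    rw [Ne, Fin.ext_iff]; simp
  rw [Finset.sum_pair hne]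
  rw [hcol, hcol, if_pos rfl, if_neg hne, if_neg (Ne.symm hne), if_pos rfl]
  rw [hminor0, hminorl]
  simp only [Fin.val_zero, Fin.val_last, pow_zero]
  have hp : ((-1:ℂ)) ^ (n+1) * (-1) ^ (n+1) = 1 := by
    rw [← pow_add, ← two_mul, pow_mul]; norm_num
  linear_combination (-1 : ℂ) * hp

private lemma pow_add_pow_cheb (J : ℝ) (r s : ℂ) (hsum : r + s = (J:ℂ)) (hprod : r * s = 1) :
    ∀ n : ℕ, r ^ n + s ^ n = ((2 * chebT n (J/2) : ℝ) : ℂ) := by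
  have key : ∀ n : ℕ, (r ^ n + s ^ n = ((2 * chebT n (J/2) : ℝ) : ℂ)) ∧
      (r ^ (n+1) + s ^ (n+1) = ((2 * chebT (n+1) (J/2) : ℝ) : ℂ)) := by
    intro n
    induction n with
    | zero =>
      constructor
      · simp [chebT]; norm_num
      · show r ^ 1 + s ^ 1 = ((2 * chebT 1 (J/2) : ℝ) : ℂ)
        have h1 : chebT 1 (J/2) = J/2 := rfl
        rw [h1]
        push_cast
        rw [pow_one, pow_one, hsum]
        ring
    | succ n ih =>
      refine ⟨ih.2, ?_⟩
      have h2 : r ^ (n+2) + s ^ (n+2)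
          = (r + s) * (r ^ (n+1) + s ^ (n+1)) - (r * s) * (r ^ n + s ^ n) := by ring
      rw [h2, hsum, hprod, ih.1, ih.2]
      have h3 : chebT (n+2) (J/2) = 2 * (J/2) * chebT (n+1) (J/2) - chebT n (J/2) := rfl
      rw [h3]
      push_cast
      ring
  exact fun n => (key n).1

theorem det_circulant (N : ℕ) [NeZero N] (hN : 3 ≤ N) (J : ℝ) :
    (circMat N J).det = 2 * chebT N (J / 2) - 2 := by
  obtain ⟨m, rfl⟩ : ∃ m, N = m + 2 := ⟨N - 2, by omega⟩
  have hm : 1 ≤ m := by omega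
  -- a root of the quadratic z^2 - J z + 1
  have hdeg : (0 : WithBot ℕ) < (X ^ 2 - C (J:ℂ) * X + C 1).degree := by
    have : (X ^ 2 - C (J:ℂ) * X + C 1).degree = 2 := by compute_degree!
    rw [this]; norm_num
  obtain ⟨r, hr⟩ := Complex.exists_root hdeg
  have hre : r ^ 2 - (J:ℂ) * r + 1 = 0 := by
    have := hr
    simp only [Polynomial.IsRoot, Polynomial.eval_add, Polynomial.eval_sub,
      Polynomial.eval_pow, Polynomial.eval_mul, Polynomial.eval_X, Polynomial.eval_C] at this
    linear_combination this
  set s : ℂ := (J:ℂ) - r with hs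
  have hsum : r + s = (J:ℂ) := by rw [hs]; ring
  have hprod : r * s = 1 := by rw [hs]; linear_combination -hre
  set P := shiftMat (m+2) with hP
  -- the complexified matrix
  have hQ : (circMat (m+2) J).map Complex.ofReal = (J:ℂ) • 1 - P - Pᵀ := by
    ext i j
    simp only [Matrix.map_apply, circMat, Matrix.sub_apply, Matrix.smul_apply,
      Matrix.one_apply, Matrix.transpose_apply, hP, shiftMat, Matrix.of_apply, smul_eq_mul]
    by_cases h1 : i = j
    · subst h1
      have hni : ¬ (i = i + 1) := fin_ne_add_one i
      simp [hni]
    · rw [if_neg h1, if_neg h1]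
      by_cases h2 : j = i + 1
      · have h3 : ¬ i = j + 1 := by
          intro hc
          exact fin_ne_add_two hm i (by rw [← h2]; exact hc)
        rw [if_pos (Or.inl h2), if_pos h2, if_neg h3]
        norm_num
      · by_cases h3 : i = j + 1
        · rw [if_pos (Or.inr h3), if_neg h2, if_pos h3]
          norm_num
        · rw [if_neg (by tauto), if_neg h2, if_neg h3]
          norm_num
  -- factorization
  have hfact : ((circMat (m+2) J).map Complex.ofReal) * P = -((P - r • 1) * (P - s • 1)) := by
    rw [hQ]
    have hPt : Pᵀ * P = 1 := shift_transpose_mul m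
    have hJP : (J:ℂ) • P = r • P + s • P := by rw [← add_smul, hsum]
    rw [Matrix.sub_mul, Matrix.sub_mul, hPt, Matrix.smul_mul, Matrix.one_mul, hJP]
    have hrhs : (P - r • 1) * (P - s • 1) = P * P - s • P - r • P + 1 := by
      have h1 : (r • (1 : Matrix (Fin (m+2)) (Fin (m+2)) ℂ)) * (s • 1) = 1 := by
        rw [Matrix.smul_mul, Matrix.one_mul, smul_smul, hprod, one_smul]
      have h2 : P * (s • (1 : Matrix (Fin (m+2)) (Fin (m+2)) ℂ)) = s • P := by
        rw [Matrix.mul_smul, Matrix.mul_one]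
      have h3 : (r • (1 : Matrix (Fin (m+2)) (Fin (m+2)) ℂ)) * P = r • P := by
        rw [Matrix.smul_mul, Matrix.one_mul]
      calc (P - r • 1) * (P - s • 1)
          = P * P - P * (s • 1) - ((r • 1) * P - (r • 1) * (s • 1)) := by
            rw [Matrix.sub_mul, Matrix.mul_sub, Matrix.mul_sub]
        _ = P * P - s • P - r • P + 1 := by rw [h1, h2, h3]; abel
    rw [hrhs]
    abel
  -- determinants
  have hdetPr : (P - r • 1).det = (-1) ^ (m+2) * (r ^ (m+2) - 1) := by
    have : P - r • 1 = -(r • 1 - P) := by rw [neg_sub]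
    rw [this, Matrix.det_neg, det_smul_one_sub_shift m r]
    simp
  have hdetPs : (P - s • 1).det = (-1) ^ (m+2) * (s ^ (m+2) - 1) := by
    have : P - s • 1 = -(s • 1 - P) := by rw [neg_sub]
    rw [this, Matrix.det_neg, det_smul_one_sub_shift m s]
    simp
  have hE := congrArg Matrix.det hfact
  rw [Matrix.det_mul, shift_det m, Matrix.det_neg, Matrix.det_mul, hdetPr, hdetPs] at hE
  simp only [Fintype.card_fin] at hE
  set D : ℂ := ((circMat (m+2) J).map Complex.ofReal).det with hD
  have hps : r ^ (m+2) * s ^ (m+2) = 1 := by rw [← mul_pow, hprod, one_pow]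
  have hkey : D = r ^ (m+2) + s ^ (m+2) - 2 := by
    rcases Nat.even_or_odd m with hpar | hpar
    · have h1 : ((-1:ℂ)) ^ (m+1) = -1 := Odd.neg_one_pow (hpar.add_one)
      have h2 : ((-1:ℂ)) ^ (m+2) = 1 := by
        rw [pow_succ, h1]; norm_num
      rw [h1, h2] at hE
      linear_combination (-1:ℂ) * hE - hps
    · have h1 : ((-1:ℂ)) ^ (m+1) = 1 := Even.neg_one_pow (hpar.add_one)
      have h2 : ((-1:ℂ)) ^ (m+2) = -1 := by
        rw [pow_succ, h1]; norm_num
      rw [h1, h2] at hE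
      linear_combination hE - hps
  -- transfer back to ℝ
  have hmap : ((circMat (m+2) J).det : ℂ) = D := by
    rw [hD]
    have := RingHom.map_det Complex.ofRealHom (circMat (m+2) J)
    exact this
  apply Complex.ofReal_injective
  rw [hmap, hkey, pow_add_pow_cheb J r s hsum hprod (m+2)]
  push_cast
  ring
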